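/- Fix a prime p and an algebraic closure Ω of ℚ_p, with the unique absolute value ‖·‖ extending the p-adic absolute value. For every α ∈ Ω with ‖α‖ = 1 there exists a unique root of unity ζ ∈ Ω whose (multiplicative) order is coprime to p such that ‖α − ζ‖ < 1. -/

import Mathlib

open IsUltrametricDist Polynomial Filter Topology

/-- In an algebraic closure `Ω` of `ℚ_p` with the absolute value extending the `p`-adic
one, every `α` with `‖α‖ = 1` is at distance `< 1` from a unique root of unity whose
order is coprime to `p`. -/
theorem stmt_9 (p : ℕ) [Fact p.Prime] (Ω : Type) [NormedField Ω]
    [Algebra ℚ_[p] Ω] [IsAlgClosure ℚ_[p] Ω]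
    (hext : ∀ x : ℚ_[p], ‖algebraMap ℚ_[p] Ω x‖ = ‖x‖)
    (α : Ω) (hα : ‖α‖ = 1) :
    ∃! ζ : Ω, (0 < orderOf ζ ∧ Nat.Coprime (orderOf ζ) p) ∧ ‖α - ζ‖ < 1 := by
  classical
  have hp : p.Prime := Fact.out
  have hp1 : 1 < p := hp.one_lt
  haveI : NeZero p := ⟨hp.ne_zero⟩
  haveI : IsAlgClosed Ω := IsAlgClosure.isAlgClosed ℚ_[p]
  -- norms of naturals are at most 1
  have hnat : ∀ n : ℕ, ‖(n : Ω)‖ ≤ 1 := fun n => by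
    rw [← map_natCast (algebraMap ℚ_[p] Ω) n, hext]
    exact_mod_cast Padic.norm_int_le_one (n : ℤ)
  haveI : IsUltrametricDist Ω := isUltrametricDist_of_forall_norm_natCast_le_one hnat
  have hmax : ∀ x y : Ω, ‖x - y‖ ≤ max ‖x‖ ‖y‖ := fun x y => by
    simpa [sub_eq_add_neg] using norm_add_le_max x (-y)
  have hpΩ : ‖(p : Ω)‖ = (p : ℝ)⁻¹ := by
    rw [← map_natCast (algebraMap ℚ_[p] Ω) p, hext]; exact Padic.norm_p
  have hcoprime_norm : ∀ r : ℕ, ¬ (p ∣ r) → ‖(r : Ω)‖ = 1 := by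
    intro r hdvd
    rw [← map_natCast (algebraMap ℚ_[p] Ω) r, hext]
    have h1 : ‖((r : ℤ) : ℚ_[p])‖ ≤ 1 := Padic.norm_int_le_one _
    have h2 : ¬ ‖((r : ℤ) : ℚ_[p])‖ < 1 := by
      rw [Padic.norm_intCast_lt_one_iff]
      exact_mod_cast hdvd
    have h3 : ((r : ℤ) : ℚ_[p]) = ((r : ℕ) : ℚ_[p]) := by push_cast; ring
    rw [h3] at h1 h2
    exact le_antisymm h1 (not_lt.mp h2)
  -- roots of unity have norm 1
  have hunit : ∀ (ζ : Ω) (n : ℕ), 0 < n → ζ ^ n = 1 → ‖ζ‖ = 1 := by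
    intro ζ n hn h
    have h1 : ‖ζ‖ ^ n = 1 := by rw [← norm_pow, h, norm_one]
    rcases lt_trichotomy ‖ζ‖ 1 with hlt | heq | hgt
    · exact absurd h1 (ne_of_lt (pow_lt_one₀ (norm_nonneg ζ) hlt hn.ne'))
    · exact heq
    · exact absurd h1 (ne_of_gt (one_lt_pow₀ hgt hn.ne'))
  -- geometric series bound
  have hgeom : ∀ (x : Ω) (s : ℕ), ‖x‖ ≤ 1 → ‖x ^ s - 1‖ ≤ ‖x - 1‖ := by
    intro x s hx
    have h := geom_sum_mul x s
    calc ‖x ^ s - 1‖ = ‖∑ i ∈ Finset.range s, x ^ i‖ * ‖x - 1‖ := by rw [← norm_mul, h]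
      _ ≤ 1 * ‖x - 1‖ := by
          refine mul_le_mul_of_nonneg_right ?_ (norm_nonneg _)
          exact norm_sum_le_of_forall_le_of_nonneg zero_le_one fun i _ => by
            rw [norm_pow]; exact pow_le_one₀ (norm_nonneg x) hx
      _ = ‖x - 1‖ := one_mul _
  -- product of (1 - ζ') over nontrivial n-th roots of unity equals n
  have hprodroots : ∀ (η : Ω) (n : ℕ), 0 < n → IsPrimitiveRoot η n →
      ∏ ζ' ∈ (nthRootsFinset n (1 : Ω)).erase 1, (1 - ζ') = (n : Ω) := by
    intro η n hn hη
    have h1 : (1 : Ω) ∈ nthRootsFinset n (1 : Ω) := (mem_nthRootsFinset hn 1).2 (one_pow n)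
    have hsplit : (X ^ n - 1 : Polynomial Ω)
        = (X - 1) * ∏ ζ' ∈ (nthRootsFinset n (1 : Ω)).erase 1, (X - C ζ') := by
      rw [X_pow_sub_one_eq_prod hn hη, ← Finset.mul_prod_erase _ _ h1, map_one]
    have hgeo : (X ^ n - 1 : Polynomial Ω) = (X - 1) * ∑ i ∈ Finset.range n, X ^ i := by
      rw [mul_comm, geom_sum_mul]
    have hXne : (X - 1 : Polynomial Ω) ≠ 0 := by
      have := X_sub_C_ne_zero (1 : Ω)
      simpa using this
    have key : ∏ ζ' ∈ (nthRootsFinset n (1 : Ω)).erase 1, (X - C ζ')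
        = ∑ i ∈ Finset.range n, (X : Polynomial Ω) ^ i :=
      mul_left_cancel₀ hXne (by rw [← hsplit, hgeo])
    have h2 := congrArg (Polynomial.eval 1) key
    simpa [eval_prod, eval_finset_sum] using h2
  -- nontrivial roots of unity of order coprime to p are at distance ≥ 1 from 1
  have hfar : ∀ ξ : Ω, ξ ≠ 1 → 0 < orderOf ξ → (orderOf ξ).Coprime p → 1 ≤ ‖ξ - 1‖ := by
    intro ξ hne hord hcop
    have hprim : IsPrimitiveRoot ξ (orderOf ξ) := IsPrimitiveRoot.orderOf ξ
    have hpr := hprodroots ξ (orderOf ξ) hord hprim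
    have hpr' : ∏ ζ' ∈ (nthRootsFinset (orderOf ξ) (1 : Ω)).erase 1, ‖1 - ζ'‖ = 1 := by
      rw [← norm_prod, hpr]
      exact hcoprime_norm (orderOf ξ) ((hp.coprime_iff_not_dvd).mp hcop.symm)
    have hmem : ξ ∈ (nthRootsFinset (orderOf ξ) (1 : Ω)).erase 1 :=
      Finset.mem_erase.2 ⟨hne, (mem_nthRootsFinset hord 1).2 (pow_orderOf_eq_one ξ)⟩
    have hle1 : ∀ ζ' ∈ (nthRootsFinset (orderOf ξ) (1 : Ω)).erase 1, ‖1 - ζ'‖ ≤ 1 := by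
      intro ζ' hζ'
      have h' : ζ' ^ (orderOf ξ) = 1 := (mem_nthRootsFinset hord 1).1 (Finset.mem_of_mem_erase hζ')
      have hn' : ‖ζ'‖ = 1 := hunit ζ' (orderOf ξ) hord h'
      calc ‖1 - ζ'‖ ≤ max ‖(1:Ω)‖ ‖ζ'‖ := hmax _ _
        _ ≤ 1 := by rw [norm_one, hn']; simp
    rw [← Finset.mul_prod_erase _ _ hmem] at hpr'
    have hrest : ∏ ζ' ∈ ((nthRootsFinset (orderOf ξ) (1 : Ω)).erase 1).erase ξ, ‖1 - ζ'‖ ≤ 1 :=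
      Finset.prod_le_one (fun i _ => norm_nonneg _)
        (fun i hi => hle1 i (Finset.mem_of_mem_erase hi))
    have hrest0 : (0:ℝ) ≤ ∏ ζ' ∈ ((nthRootsFinset (orderOf ξ) (1 : Ω)).erase 1).erase ξ, ‖1 - ζ'‖ :=
      Finset.prod_nonneg fun i _ => norm_nonneg _
    have h1ξ : (1:ℝ) ≤ ‖1 - ξ‖ := by nlinarith [norm_nonneg (1 - ξ)]
    rwa [norm_sub_rev] at h1ξ
  -- p-th roots of unity are at distance < 1 from 1
  have hnear : ∀ η : Ω, η ^ p = 1 → ‖η - 1‖ < 1 := by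
    intro η hη
    by_cases hne : η = 1
    · simp [hne]
    have hη1 : ‖η‖ = 1 := hunit η p hp.pos hη
    have hord : orderOf η = p := orderOf_eq_prime hη hne
    have hprim : IsPrimitiveRoot η p := hord ▸ IsPrimitiveRoot.orderOf η
    have hpr := hprodroots η p hp.pos hprim
    have heqn : ∀ ζ' ∈ (nthRootsFinset p (1 : Ω)).erase 1, ‖1 - ζ'‖ = ‖1 - η‖ := by
      intro ζ' h
      obtain ⟨hne', hmem⟩ := Finset.mem_erase.1 h
      have hζp : ζ' ^ p = 1 := (mem_nthRootsFinset hp.pos 1).1 hmem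
      obtain ⟨i, hi, rfl⟩ := hprim.eq_pow_of_pow_eq_one hζp
      have h1 : ‖1 - η ^ i‖ ≤ ‖1 - η‖ := by
        have := hgeom η i (le_of_eq hη1)
        rwa [norm_sub_rev, norm_sub_rev η 1] at this
      have hord' : orderOf (η ^ i) = p :=
        orderOf_eq_prime (by rw [← pow_mul, mul_comm, pow_mul, hη, one_pow]) hne'
      have hprim' : IsPrimitiveRoot (η ^ i) p := hord' ▸ IsPrimitiveRoot.orderOf (η ^ i)
      obtain ⟨j, hj, hji⟩ := hprim'.eq_pow_of_pow_eq_one hη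
      have h2 : ‖1 - η‖ ≤ ‖1 - η ^ i‖ := by
        have hn' : ‖η ^ i‖ = 1 := by rw [norm_pow, hη1, one_pow]
        have hgj := hgeom (η ^ i) j (le_of_eq hn')
        rw [hji] at hgj
        rwa [norm_sub_rev, norm_sub_rev (η ^ i) 1] at hgj
      exact le_antisymm h1 h2
    have hcard : ((nthRootsFinset p (1 : Ω)).erase 1).card = p - 1 := by
      rw [Finset.card_erase_of_mem ((mem_nthRootsFinset hp.pos 1).2 (one_pow p)),
        hprim.card_nthRootsFinset]
    have hpow : ‖1 - η‖ ^ (p - 1) = (p:ℝ)⁻¹ := by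
      calc ‖1 - η‖ ^ (p - 1) = ∏ ζ' ∈ (nthRootsFinset p (1 : Ω)).erase 1, ‖1 - ζ'‖ := by
            rw [Finset.prod_congr rfl heqn, Finset.prod_const, hcard]
        _ = ‖(p : Ω)‖ := by rw [← norm_prod, hpr]
        _ = (p:ℝ)⁻¹ := hpΩ
    by_contra hcon
    push_neg at hcon
    rw [norm_sub_rev] at hcon
    have h1 : (1:ℝ) ≤ ‖1 - η‖ ^ (p - 1) := one_le_pow₀ hcon
    rw [hpow] at h1
    have h2 : (p:ℝ)⁻¹ < 1 := by
      rw [inv_lt_one_iff₀]; right; exact_mod_cast hp1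
    linarith
  -- descent: extracting p-th roots
  have hdesc : ∀ x : Ω, ‖x‖ = 1 → ‖x ^ p - 1‖ < 1 → ‖x - 1‖ < 1 := by
    intro x hx h
    set f : Polynomial Ω := X ^ p - C 1 with hf
    have hmonic : f.Monic := monic_X_pow_sub_C (1 : Ω) hp.ne_zero
    have hsplits : Splits f := IsAlgClosed.splits f
    have hfeq : f = (f.roots.map (fun a => X - C a)).prod :=
      hsplits.eq_prod_roots_of_monic hmonic
    have heval : x ^ p - 1 = ((f.roots.map (fun a => x - a)).prod) := by
      have h2 := congrArg (eval x) hfeq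
      simpa [hf, eval_multiset_prod, Multiset.map_map, Function.comp] using h2
    by_contra hcon
    push_neg at hcon
    have hfar' : ∀ a ∈ f.roots, (1:ℝ) ≤ ‖x - a‖ := by
      intro a ha
      have hap : a ^ p = 1 := by
        have h3 : f.eval a = 0 := by
          exact (mem_roots (p := f) (by
            intro h0; rw [h0] at hmonic; exact (not_monic_zero (R := Ω)) hmonic)).1 ha
        have h4 : a ^ p - 1 = 0 := by simpa [hf] using h3
        exact sub_eq_zero.mp h4
      by_contra hlt
      push_neg at hlt
      have h5 : ‖x - 1‖ < 1 := by
        have h6 : x - 1 = (x - a) + (a - 1) := by ring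
        rw [h6]
        exact lt_of_le_of_lt (norm_add_le_max _ _) (max_lt hlt (hnear a hap))
      exact absurd h5 (not_lt.2 hcon)
    have h7 : (1:ℝ) ≤ ‖x ^ p - 1‖ := by
      rw [heval]
      have h8 : ∀ s : Multiset Ω, ‖s.prod‖ = (s.map norm).prod := by
        intro s
        induction s using Multiset.induction_on with
        | empty => simp
        | cons b s ih => simp only [Multiset.prod_cons, Multiset.map_cons, norm_mul, ih]
      have hone : ∀ s : Multiset ℝ, (∀ r ∈ s, (1:ℝ) ≤ r) → 1 ≤ s.prod := by
        intro s
        induction s using Multiset.induction_on with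
        | empty => simp
        | cons b s ih =>
          intro hall
          rw [Multiset.prod_cons]
          have hb := hall b (Multiset.mem_cons_self b s)
          have hs := ih fun r hr => hall r (Multiset.mem_cons_of_mem hr)
          nlinarith
      rw [h8, Multiset.map_map]
      refine hone _ ?_
      intro r hr
      obtain ⟨a, ha, rfl⟩ := Multiset.mem_map.1 hr
      exact hfar' a ha
    linarith
  have hiter : ∀ a : ℕ, ∀ x : Ω, ‖x‖ = 1 → ‖x ^ (p ^ a) - 1‖ < 1 → ‖x - 1‖ < 1 := by
    intro a
    induction a with
    | zero => intro x hx h; simpa using h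
    | succ n ih =>
      intro x hx h
      refine ih x hx (hdesc (x ^ (p ^ n)) (by rw [norm_pow, hx, one_pow]) ?_)
      rw [← pow_mul, ← pow_succ]
      exact h
  -- Set up the finite-dimensional subspace generated by α
  letI : NormedSpace ℚ_[p] Ω :=
    { norm_smul_le := fun c x => le_of_eq (by rw [Algebra.smul_def, norm_mul, hext]) }
  set S : Submodule ℚ_[p] Ω := Subalgebra.toSubmodule (Algebra.adjoin ℚ_[p] {α}) with hS
  have hαalg : IsAlgebraic ℚ_[p] α := Algebra.IsAlgebraic.isAlgebraic α
  have hαint : IsIntegral ℚ_[p] α := hαalg.isIntegral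
  haveI : FiniteDimensional ℚ_[p] S := Module.Finite.iff_fg.mpr hαint.fg_adjoin_singleton
  haveI : ProperSpace S := FiniteDimensional.proper ℚ_[p] S
  have hmemS : ∀ k : ℕ, α ^ k ∈ S := fun k =>
    pow_mem (Algebra.self_mem_adjoin_singleton ℚ_[p] α) k
  set u : ℕ → S := fun k => ⟨α ^ k, hmemS k⟩ with hu
  have hunorm : ∀ k, ‖u k‖ = 1 := fun k => by
    have : ‖u k‖ = ‖α ^ k‖ := rfl
    rw [this, norm_pow, hα, one_pow]
  have hball : ∀ k, u k ∈ Metric.closedBall (0 : S) 1 := fun k => by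
    rw [Metric.mem_closedBall, dist_zero_right, hunorm]
  obtain ⟨x0, -, φ, hφ, hconv⟩ := (isCompact_closedBall (0 : S) 1).tendsto_subseq hball
  obtain ⟨N, hN⟩ := (Metric.tendsto_atTop.mp hconv) (1/2) (by norm_num)
  have hij : dist (u (φ N)) (u (φ (N+1))) < 1 := by
    have h1 := hN N le_rfl
    have h2 := hN (N+1) (Nat.le_succ N)
    calc dist (u (φ N)) (u (φ (N+1)))
        ≤ dist (u (φ N)) x0 + dist x0 (u (φ (N+1))) := dist_triangle _ _ _
      _ < 1/2 + 1/2 := by rw [dist_comm x0]; exact add_lt_add h1 h2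
      _ = 1 := by norm_num
  have hlt : φ N < φ (N+1) := hφ (Nat.lt_succ_self N)
  have hdist : ‖α ^ (φ N) - α ^ (φ (N+1))‖ < 1 := by
    have h1 : dist (u (φ N)) (u (φ (N+1))) = ‖α ^ (φ N) - α ^ (φ (N+1))‖ := by
      rw [dist_eq_norm]; rfl
    rwa [h1] at hij
  set d := φ (N+1) - φ N with hdd
  have hd0 : 0 < d := Nat.sub_pos_of_lt hlt
  have hαd : ‖α ^ d - 1‖ < 1 := by
    have hij' : α ^ (φ (N+1)) = α ^ (φ N) * α ^ d := by
      rw [← pow_add, hdd, Nat.add_sub_cancel' (le_of_lt hlt)]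
    have h2 : α ^ (φ N) - α ^ (φ (N+1)) = α ^ (φ N) * (1 - α ^ d) := by rw [hij']; ring
    have hni : ‖α ^ (φ N)‖ = 1 := by rw [norm_pow, hα, one_pow]
    rw [norm_sub_rev]
    calc ‖1 - α ^ d‖ = ‖α ^ (φ N) - α ^ (φ (N+1))‖ := by rw [h2, norm_mul, hni, one_mul]
      _ < 1 := hdist
  -- extract the part of d coprime to p
  set m := d / p ^ (d.factorization p) with hm
  have hm0 : 0 < m := Nat.ordCompl_pos p hd0.ne'
  have hmp : ¬ p ∣ m := Nat.not_dvd_ordCompl hp hd0.ne'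
  have hdm : p ^ (d.factorization p) * m = d := Nat.ordProj_mul_ordCompl_eq_self d p
  have hαm : ‖α ^ m - 1‖ < 1 := by
    refine hiter (d.factorization p) (α ^ m) (by rw [norm_pow, hα, one_pow]) ?_
    rw [← pow_mul, mul_comm m, hdm]
    exact hαd
  -- contraction setup
  set c := ‖α ^ m - 1‖ with hc
  have hc0 : (0:ℝ) ≤ c := norm_nonneg _
  have hc1 : c < 1 := hαm
  set t := max c (p:ℝ)⁻¹ with ht
  have hpR : (1:ℝ) < p := by exact_mod_cast hp1
  have ht1 : t < 1 := max_lt hc1 (by rw [inv_lt_one_iff₀]; right; exact hpR)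
  have ht0 : (0:ℝ) ≤ t := le_trans hc0 (le_max_left _ _)
  have hct : c ≤ t := le_max_left _ _
  have hpt : (p:ℝ)⁻¹ ≤ t := le_max_right _ _
  have ht_le1 : t ≤ 1 := le_of_lt ht1
  have hcontr : ∀ x y : Ω, ‖x‖ ≤ 1 → ‖y‖ ≤ 1 → ‖x - y‖ ≤ c → ‖x ^ p - y ^ p‖ ≤ t * ‖x - y‖ := by
    intro x y hx hy hxy
    have hnh : ‖x - y‖ ≤ 1 := le_trans hxy (le_trans hct ht_le1)
    have key : x ^ p - y ^ p
        = ∑ k ∈ Finset.range p, y ^ k * (x - y) ^ (p - k) * ((p.choose k : ℕ) : Ω) := by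
      have hxyh : x = y + (x - y) := by ring
      calc x ^ p - y ^ p = (y + (x - y)) ^ p - y ^ p := by rw [← hxyh]
        _ = _ := by
            rw [add_pow, Finset.sum_range_succ, Nat.sub_self, pow_zero, Nat.choose_self,
              Nat.cast_one, mul_one, mul_one, add_sub_cancel_right]
    rw [key]
    refine norm_sum_le_of_forall_le_of_nonneg (mul_nonneg ht0 (norm_nonneg _)) ?_
    intro k hk
    have hk' : k < p := Finset.mem_range.1 hk
    rw [norm_mul, norm_mul, norm_pow, norm_pow]
    rcases Nat.eq_zero_or_pos k with rfl | hkpos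
    · simp only [pow_zero, one_mul, Nat.sub_zero, Nat.choose_zero_right, Nat.cast_one,
        norm_one, mul_one]
      have hsplit : ‖x - y‖ ^ p = ‖x - y‖ ^ (p - 1) * ‖x - y‖ := by
        rw [← pow_succ, Nat.sub_add_cancel hp.one_le]
      rw [hsplit]
      refine mul_le_mul_of_nonneg_right ?_ (norm_nonneg _)
      calc ‖x - y‖ ^ (p - 1) ≤ ‖x - y‖ :=
            pow_le_of_le_one (norm_nonneg _) hnh (Nat.sub_ne_zero_of_lt hp1)
        _ ≤ c := hxy
        _ ≤ t := hct
    · have hdvd : p ∣ p.choose k := hp.dvd_choose_self hkpos.ne' hk'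
      obtain ⟨s, hs⟩ := hdvd
      have hC : ‖((p.choose k : ℕ) : Ω)‖ ≤ (p:ℝ)⁻¹ := by
        rw [hs]
        push_cast
        rw [norm_mul, hpΩ]
        calc (p:ℝ)⁻¹ * ‖((s:ℕ) : Ω)‖ ≤ (p:ℝ)⁻¹ * 1 := by
              refine mul_le_mul_of_nonneg_left (hnat s) (by positivity)
          _ = (p:ℝ)⁻¹ := mul_one _
      have hy' : ‖y‖ ^ k ≤ 1 := pow_le_one₀ (norm_nonneg y) hy
      have hh' : ‖x - y‖ ^ (p - k) ≤ ‖x - y‖ := by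
        calc ‖x - y‖ ^ (p - k) ≤ ‖x - y‖ ^ 1 :=
              pow_le_pow_of_le_one (norm_nonneg _) hnh (by omega)
          _ = ‖x - y‖ := pow_one _
      calc ‖y‖ ^ k * ‖x - y‖ ^ (p - k) * ‖((p.choose k : ℕ) : Ω)‖
          ≤ 1 * ‖x - y‖ * (p:ℝ)⁻¹ := by
            refine mul_le_mul (mul_le_mul hy' hh' (by positivity) zero_le_one) hC
              (norm_nonneg _) (by positivity)
        _ = (p:ℝ)⁻¹ * ‖x - y‖ := by ring
        _ ≤ t * ‖x - y‖ := mul_le_mul_of_nonneg_right hpt (norm_nonneg _)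
  have hcontr' : ∀ x y : Ω, ‖x‖ ≤ 1 → ‖y‖ ≤ 1 → ‖x - y‖ ≤ c →
      ∀ jj : ℕ, ‖x ^ (p ^ jj) - y ^ (p ^ jj)‖ ≤ t ^ jj * ‖x - y‖ := by
    intro x y hx hy hxy jj
    induction jj with
    | zero => simp
    | succ n ih =>
      have hxn : ‖x ^ (p ^ n)‖ ≤ 1 := by rw [norm_pow]; exact pow_le_one₀ (norm_nonneg x) hx
      have hyn : ‖y ^ (p ^ n)‖ ≤ 1 := by rw [norm_pow]; exact pow_le_one₀ (norm_nonneg y) hy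
      have htn : t ^ n ≤ 1 := pow_le_one₀ ht0 ht_le1
      have hsub : ‖x ^ (p ^ n) - y ^ (p ^ n)‖ ≤ c := by
        refine le_trans ih ?_
        calc t ^ n * ‖x - y‖ ≤ 1 * ‖x - y‖ :=
              mul_le_mul_of_nonneg_right htn (norm_nonneg _)
          _ = ‖x - y‖ := one_mul _
          _ ≤ c := hxy
      have hstep := hcontr (x ^ (p ^ n)) (y ^ (p ^ n)) hxn hyn hsub
      rw [← pow_mul, ← pow_mul, ← pow_succ] at hstep
      calc ‖x ^ (p ^ (n+1)) - y ^ (p ^ (n+1))‖ ≤ t * ‖x ^ (p ^ n) - y ^ (p ^ n)‖ := hstep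
        _ ≤ t * (t ^ n * ‖x - y‖) := mul_le_mul_of_nonneg_left ih ht0
        _ = t ^ (n+1) * ‖x - y‖ := by ring
  -- the Frobenius-type exponent q
  set e := Nat.totient m with he
  have he0 : 0 < e := by rw [he]; exact Nat.totient_pos.mpr hm0
  set q := p ^ e with hq
  have hq1 : 1 ≤ q := Nat.one_le_pow _ _ hp.pos
  have hq2 : 2 ≤ q := by
    have h1 : p ≤ p ^ e := Nat.le_self_pow he0.ne' p
    omega
  have hqm : m ∣ q - 1 := by
    have hcop : Nat.Coprime p m := (hp.coprime_iff_not_dvd).2 hmp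
    have hmod : p ^ e ≡ 1 [MOD m] := Nat.ModEq.pow_totient hcop
    exact (Nat.modEq_iff_dvd' hq1).mp hmod.symm
  have hαq : ‖α ^ q - α‖ ≤ c := by
    obtain ⟨s, hs⟩ := hqm
    have h1 : q = 1 + m * s := by omega
    have h2 : α ^ q - α = α * ((α ^ m) ^ s - 1) := by
      rw [h1, pow_add, pow_one, pow_mul]; ring
    rw [h2, norm_mul, hα, one_mul]
    exact hgeom (α ^ m) s (by rw [norm_pow, hα, one_pow])
  have hwq : ∀ x y : Ω, ‖x‖ ≤ 1 → ‖y‖ ≤ 1 → ‖x - y‖ ≤ c → ‖x ^ q - y ^ q‖ ≤ t * ‖x - y‖ := by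
    intro x y hx hy hxy
    calc ‖x ^ q - y ^ q‖ ≤ t ^ e * ‖x - y‖ := hcontr' x y hx hy hxy e
      _ ≤ t * ‖x - y‖ := by
          refine mul_le_mul_of_nonneg_right ?_ (norm_nonneg _)
          calc t ^ e ≤ t ^ 1 := pow_le_pow_of_le_one ht0 ht_le1 he0
            _ = t := pow_one t
  -- the Teichmüller sequence
  set w : ℕ → Ω := fun k => α ^ (q ^ k) with hw
  have hwnorm : ∀ k, ‖w k‖ = 1 := fun k => by
    show ‖α ^ (q ^ k)‖ = 1
    rw [norm_pow, hα, one_pow]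
  have hwsucc : ∀ k, w (k+1) = (w k) ^ q := fun k => by
    show α ^ (q ^ (k+1)) = (α ^ (q ^ k)) ^ q
    exact (congrArg (fun n => α ^ n) (pow_succ q k)).trans (pow_mul α (q ^ k) q)
  have hstep : ∀ k, ‖w (k+1) - w k‖ ≤ t ^ k * c := by
    intro k
    induction k with
    | zero =>
      have : w 1 - w 0 = α ^ q - α := by
        show α ^ (q ^ 1) - α ^ (q ^ 0) = α ^ q - α
        rw [pow_one, pow_zero, pow_one]
      rw [this, pow_zero, one_mul]
      exact hαq
    | succ n ih =>
      have htn : t ^ n ≤ 1 := pow_le_one₀ ht0 ht_le1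
      have hb : ‖w (n+1) - w n‖ ≤ c := by
        refine le_trans ih ?_
        calc t ^ n * c ≤ 1 * c := mul_le_mul_of_nonneg_right htn hc0
          _ = c := one_mul _
      calc ‖w (n+2) - w (n+1)‖ = ‖(w (n+1)) ^ q - (w n) ^ q‖ := by
            rw [hwsucc (n+1), hwsucc n]
        _ ≤ t * ‖w (n+1) - w n‖ :=
            hwq _ _ (le_of_eq (hwnorm _)) (le_of_eq (hwnorm _)) hb
        _ ≤ t * (t ^ n * c) := mul_le_mul_of_nonneg_left ih ht0
        _ = t ^ (n+1) * c := by ring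
  have hcauchy : CauchySeq w := by
    refine cauchySeq_of_le_geometric t c ht1 fun n => ?_
    rw [dist_eq_norm, norm_sub_rev]
    calc ‖w (n+1) - w n‖ ≤ t ^ n * c := hstep n
      _ = c * t ^ n := mul_comm _ _
  have hwS : ∀ k, w k ∈ (S : Set Ω) := fun k => hmemS _
  obtain ⟨ζ, hζS, hζ⟩ :=
    cauchySeq_tendsto_of_isComplete (Submodule.complete_of_finiteDimensional S) hwS hcauchy
  -- ζ is a root of unity of order coprime to p, close to α
  have hζq : ζ ^ q = ζ := by
    have h1 : Tendsto (fun k => (w k) ^ q) atTop (𝓝 (ζ ^ q)) := hζ.pow q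
    have h2 : Tendsto (fun k => w (k+1)) atTop (𝓝 ζ) := hζ.comp (tendsto_add_atTop_nat 1)
    have h3 : (fun k => w (k+1)) = fun k => (w k) ^ q := funext hwsucc
    rw [h3] at h2
    exact (tendsto_nhds_unique h1 h2)
  have hζnorm : ‖ζ‖ = 1 := by
    have h1 := hζ.norm
    simp only [hwnorm] at h1
    exact tendsto_nhds_unique h1 tendsto_const_nhds
  have hζ0 : ζ ≠ 0 := by
    intro h; rw [h, norm_zero] at hζnorm; linarith
  have hζpow : ζ ^ (q - 1) = 1 := by
    have h1 : ζ ^ (q-1) * ζ = 1 * ζ := by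
      rw [← pow_succ, Nat.sub_add_cancel hq1, hζq, one_mul]
    exact mul_right_cancel₀ hζ0 h1
  have hαζ : ‖α - ζ‖ < 1 := by
    have hbound : ∀ k, ‖α - w k‖ ≤ c := by
      intro k
      induction k with
      | zero =>
        have h0 : w 0 = α := by show α ^ (q ^ 0) = α; rw [pow_zero, pow_one]
        rw [h0]; simpa using hc0
      | succ n ih =>
        have h1 : α - w (n+1) = (α - w n) + (w n - w (n+1)) := by ring
        rw [h1]
        refine le_trans (norm_add_le_max _ _) (max_le ih ?_)
        rw [norm_sub_rev]
        refine le_trans (hstep n) ?_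
        calc t ^ n * c ≤ 1 * c :=
              mul_le_mul_of_nonneg_right (pow_le_one₀ ht0 ht_le1) hc0
          _ = c := one_mul _
    have hlim : Tendsto (fun k => ‖α - w k‖) atTop (𝓝 ‖α - ζ‖) :=
      (tendsto_const_nhds.sub hζ).norm
    have h2 := le_of_tendsto hlim (Eventually.of_forall hbound)
    exact lt_of_le_of_lt h2 hc1
  have hfin : 0 < orderOf ζ :=
    orderOf_pos_iff.mpr (isOfFinOrder_iff_pow_eq_one.mpr ⟨q - 1, by omega, hζpow⟩)
  have hcop : (orderOf ζ).Coprime p := by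
    have hdv : orderOf ζ ∣ q - 1 := orderOf_dvd_of_pow_eq_one hζpow
    rw [Nat.coprime_comm]
    refine (hp.coprime_iff_not_dvd).2 ?_
    intro hpd
    have h1 : p ∣ q - 1 := hpd.trans hdv
    have h2 : p ∣ q := dvd_pow_self p he0.ne'
    have h3 : p ∣ q - (q - 1) := Nat.dvd_sub h2 h1
    have h4 : q - (q - 1) = 1 := by omega
    rw [h4] at h3
    exact absurd (Nat.le_of_dvd one_pos h3) (by omega)
  refine ⟨ζ, ⟨⟨hfin, hcop⟩, hαζ⟩, ?_⟩
  rintro y ⟨⟨hy1, hy2⟩, hy3⟩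
  have hyζ : ‖y - ζ‖ < 1 := by
    have h1 : y - ζ = -(α - y) + (α - ζ) := by ring
    rw [h1]
    refine lt_of_le_of_lt (norm_add_le_max _ _) (max_lt ?_ hαζ)
    rw [norm_neg]
    exact hy3
  have hξn : (y * ζ⁻¹) ^ (orderOf y * orderOf ζ) = 1 := by
    rw [mul_pow, inv_pow]
    rw [pow_mul y, pow_orderOf_eq_one, one_pow, one_mul]
    rw [mul_comm (orderOf y), pow_mul ζ, pow_orderOf_eq_one, one_pow, inv_one]
  have hn0 : 0 < orderOf y * orderOf ζ := Nat.mul_pos hy1 hfin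
  have hξ1 : y * ζ⁻¹ = 1 := by
    by_contra hne
    have hord : 0 < orderOf (y * ζ⁻¹) :=
      orderOf_pos_iff.mpr (isOfFinOrder_iff_pow_eq_one.mpr ⟨_, hn0, hξn⟩)
    have hcopξ : (orderOf (y * ζ⁻¹)).Coprime p :=
      Nat.Coprime.coprime_dvd_left (orderOf_dvd_of_pow_eq_one hξn) (Nat.Coprime.mul hy2 hcop)
    have hge := hfar (y * ζ⁻¹) hne hord hcopξ
    have hζinv : ‖ζ⁻¹‖ = 1 := by rw [norm_inv, hζnorm, inv_one]
    have h1 : y * ζ⁻¹ - 1 = (y - ζ) * ζ⁻¹ := by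
      field_simp
    rw [h1, norm_mul, hζinv, mul_one] at hge
    linarith
  exact (mul_inv_eq_one₀ hζ0).mp hξ1
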